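/- Let P = A₁*a₁ ⋯ A_k*a_k A^∞ be an unambiguous monomial. Then the following are equivalent: (1) there is no index i with 1 ≤ i ≤ k such that {a_i, …, a_k} ⊆ A_i; (2) P is closed in the alphabetic topology; (3) P is clopen in the alphabetic topology. -/

import Mathlib

namespace InfWords

variable {Γ : Type}

/-- Finite and infinite words over `Γ`: `Γ^∞ = Γ* ∪ Γ^ω`. -/
abbrev Word (Γ : Type) := List Γ ⊕ (ℕ → Γ)

/-- Prepend a finite word to a finite or infinite word. -/
def wappend (u : List Γ) : Word Γ → Word Γ
  | Sum.inl v => Sum.inl (u ++ v)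
  | Sum.inr f => Sum.inr fun n => if h : n < u.length then u.get ⟨n, h⟩ else f (n - u.length)

/-- The set of finite words `Γ*` inside `Γ^∞`. -/
def finWords (Γ : Type) : Set (Word Γ) := Set.range Sum.inl

/-- The set of infinite words `Γ^ω` inside `Γ^∞`. -/
def infWords (Γ : Type) : Set (Word Γ) := Set.range Sum.inr

/-- The alphabet of a word: the letters occurring in it. -/
def alph : Word Γ → Set Γ
  | Sum.inl u => {a | a ∈ u}
  | Sum.inr f => {a | ∃ n, f n = a}

/-- The imaginary part: letters occurring infinitely often. -/
def im : Word Γ → Set Γ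
  | Sum.inl _ => ∅
  | Sum.inr f => {a | ∀ n, ∃ m, n ≤ m ∧ f m = a}

/-- `A^∞`: words all of whose letters lie in `A`. -/
def infin (A : Set Γ) : Set (Word Γ) := {α | alph α ⊆ A}

/-- The basic set `u A^∞` of the alphabetic topology. -/
def cone (u : List Γ) (A : Set Γ) : Set (Word Γ) := wappend u '' infin A

/-- The alphabetic topology on `Γ^∞`, generated by the sets `u A^∞`. -/
instance alphTop : TopologicalSpace (Word Γ) :=
  TopologicalSpace.generateFrom {S | ∃ u A, S = cone u A}

/-- `cpx A`: words with `alph = im = A`. -/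
def cpx (A : Set Γ) : Set (Word Γ) := {β | alph β = A ∧ im β = A}

/-- The strict alphabetic topology, generated by the sets `u · cpx A`. -/
def strictTopo (Γ : Type) : TopologicalSpace (Word Γ) :=
  TopologicalSpace.generateFrom {S | ∃ u A, S = wappend u '' cpx A}

/-- `u` is a finite prefix of the word `α`. -/
def IsPre (u : List Γ) : Word Γ → Prop
  | Sum.inl v => u <+: v
  | Sum.inr f => ∀ i : Fin u.length, u.get i = f i.1

/-- The arrow language `→W`: every prefix extends to a prefix lying in `W`. -/
def arrow (W : Set (List Γ)) : Set (Word Γ) :=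
  {α | ∀ u, IsPre u α → ∃ v, IsPre (u ++ v) α ∧ u ++ v ∈ W}

/-- The right quotient `L / A^∞`. -/
def quotInf (L : Set (Word Γ)) (A : Set Γ) : Set (List Γ) :=
  {u | ∃ β ∈ infin A, wappend u β ∈ L}

/-- `A^im`: words whose set of letters occurring infinitely often is exactly `A`. -/
def imSet (A : Set Γ) : Set (Word Γ) := {α | im α = A}

/-- `z^ω`, with the convention `1^ω = 1`. -/
def omegaPow : List Γ → Word Γ
  | [] => Sum.inl []
  | a :: l => Sum.inr fun n => (a :: l).get ⟨n % (a :: l).length, Nat.mod_lt n (Nat.succ_pos _)⟩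

/-- The partial products `u v₀ v₁ ⋯ v_{n-1}`. -/
def partialProd (u : List Γ) (v : ℕ → List Γ) (n : ℕ) : List Γ :=
  u ++ ((List.range n).map v).flatten

/-- `α` is the (finite or infinite) product `u v₀ v₁ v₂ ⋯`, with convention `1^ω = 1`. -/
def IsInfProd (u : List Γ) (v : ℕ → List Γ) : Word Γ → Prop
  | Sum.inl w => (∀ n, partialProd u v n <+: w) ∧ ∃ n, partialProd u v n = w
  | Sum.inr f => (∀ n, IsPre (partialProd u v n) (Sum.inr f)) ∧
      ∀ k, ∃ n, k < (partialProd u v n).length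

/-- `h : Γ* → M` is a monoid homomorphism. -/
structure IsHom {M : Type} [Monoid M] (h : List Γ → M) : Prop where
  map_one : h [] = 1
  map_mul : ∀ u v, h (u ++ v) = h u * h v

/-- `[s][e]^ω`: products `u v₀ v₁ ⋯` with `h u = s` and `h vᵢ = e`. -/
def pairSet {M : Type} (h : List Γ → M) (s e : M) : Set (Word Γ) :=
  {α | ∃ u v, h u = s ∧ (∀ i, h (v i) = e) ∧ IsInfProd u v α}

/-- `(s, e)` is a linked pair. -/
def LinkedPair {M : Type} [Monoid M] (s e : M) : Prop := s * e = s ∧ e * e = e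

/-- `h` strongly recognizes `L`. -/
def StronglyRecognizes {M : Type} [Monoid M] (h : List Γ → M) (L : Set (Word Γ)) : Prop :=
  L = ⋃ (s : M) (e : M) (_ : LinkedPair s e ∧ (pairSet h s e ∩ L).Nonempty), pairSet h s e

/-- `L` is regular: strongly recognized by a surjective homomorphism onto a finite monoid. -/
def Regular (L : Set (Word Γ)) : Prop :=
  ∃ (M : Type) (i : Monoid M), Finite M ∧
    ∃ h : List Γ → M, @IsHom Γ M i h ∧ Function.Surjective h ∧ @StronglyRecognizes Γ M i h L

/-- `L` is deterministic. -/
def Deterministic (L : Set (Word Γ)) : Prop :=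
  Regular L ∧ ∃ W : Set (List Γ), L ∩ infWords Γ = arrow W ∩ infWords Γ

/-- The syntactic preorder `u ≤_L v`. -/
def synLe (L : Set (Word Γ)) (u v : List Γ) : Prop :=
  ∀ x y z : List Γ,
    (wappend (x ++ v ++ y) (omegaPow z) ∈ L → wappend (x ++ u ++ y) (omegaPow z) ∈ L) ∧
    (wappend x (omegaPow (v ++ y)) ∈ L → wappend x (omegaPow (u ++ y)) ∈ L)

/-- The syntactic congruence `u ≡_L v`. -/
def synEq (L : Set (Word Γ)) (u v : List Γ) : Prop := synLe L u v ∧ synLe L v u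

/-- `[s][e]^ω` for syntactic classes represented by words `s`, `e`. -/
def pairSetSyn (L : Set (Word Γ)) (s e : List Γ) : Set (Word Γ) :=
  {α | ∃ u v, synEq L u s ∧ (∀ i, synEq L (v i) e) ∧ IsInfProd u v α}

/-- `s` represents an element of `M_e` in the syntactic monoid of `L`:
`s` is a product of words each of which is a factor of (something equivalent to) `e`. -/
def InMe (L : Set (Word Γ)) (e s : List Γ) : Prop :=
  ∃ parts : List (List Γ), s = parts.flatten ∧ ∀ p ∈ parts, ∃ x y, synEq L (x ++ p ++ y) e

/-- Glue a factorization `u₁ a₁ u₂ a₂ ⋯ u_k a_k` into a single finite word. -/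
def glue : List (List Γ) → List (Set Γ × Γ) → List Γ
  | x :: xs, p :: l => x ++ p.2 :: glue xs l
  | _, _ => []

/-- `(us, β)` is a factorization of `α` as `u₁ a₁ ⋯ u_k a_k β` with `uᵢ ∈ Aᵢ*`, `β ∈ B^∞`. -/
def IsFactorization (l : List (Set Γ × Γ)) (B : Set Γ) (us : List (List Γ)) (β : Word Γ)
    (α : Word Γ) : Prop :=
  us.length = l.length ∧
  (∀ (i : ℕ) (h1 : i < us.length) (h2 : i < l.length),
    ∀ c ∈ us.get ⟨i, h1⟩, c ∈ (l.get ⟨i, h2⟩).1) ∧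
  β ∈ infin B ∧ α = wappend (glue us l) β

/-- The monomial `A₁* a₁ ⋯ A_k* a_k B^∞`. -/
def monomial (l : List (Set Γ × Γ)) (B : Set Γ) : Set (Word Γ) :=
  {α | ∃ us β, IsFactorization l B us β α}

/-- The monomial given by `(l, B)` is unambiguous. -/
def Unambiguous (l : List (Set Γ × Γ)) (B : Set Γ) : Prop :=
  ∀ α us β us' β', IsFactorization l B us β α → IsFactorization l B us' β' α →
    us = us' ∧ β = β'

/-- `L` is a polynomial: a finite union of monomials. -/
def IsPolynomial (L : Set (Word Γ)) : Prop :=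
  ∃ ms : List (List (Set Γ × Γ) × Set Γ), L = {α | ∃ m ∈ ms, α ∈ monomial m.1 m.2}

/-- The set of marker letters of a monomial. -/
def sndSet (l : List (Set Γ × Γ)) : Set Γ := {a | ∃ p ∈ l, p.2 = a}

/-- `M_e`: the submonoid generated by the factors of the idempotent `e`. -/
def Msub {M : Type} [Monoid M] (e : M) : Submonoid M :=
  Submonoid.closure {t | ∃ x y, x * t * y = e}

/-- The variety `DA`: `ese = e` for all idempotents `e` and all `s ∈ M_e`. -/
def IsDA (M : Type) [Monoid M] : Prop :=
  ∀ e : M, e * e = e → ∀ s ∈ Msub e, e * s * e = e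

end InfWords

namespace InfWords

variable {Γ : Type}

lemma wappend_nil (β : Word Γ) : wappend [] β = β := by
  cases β with
  | inl v => simp [wappend]
  | inr f => simp [wappend]

lemma wappend_append (u v : List Γ) (β : Word Γ) :
    wappend (u ++ v) β = wappend u (wappend v β) := by
  cases β with
  | inl w => simp [wappend]
  | inr f =>
    simp only [wappend]
    congr 1
    funext n
    rcases lt_or_ge n u.length with h | h
    · have : n < u.length + v.length := by omega
      simp [this, h, List.getElem_append, List.get_eq_getElem]
    · rcases lt_or_ge (n - u.length) v.length with h2 | h2
      · have : n < u.length + v.length := by omega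
        simp [List.get_eq_getElem, this, h, h2, List.getElem_append, Nat.not_lt.2 h]
      · have : ¬ n < u.length + v.length := by omega
        simp [List.get_eq_getElem, this, Nat.not_lt.2 h, h2, Nat.not_lt.2 h2]
        congr 1
        omega

lemma alph_wappend (u : List Γ) (β : Word Γ) :
    alph (wappend u β) = {c | c ∈ u} ∪ alph β := by
  cases β with
  | inl v =>
    ext x; simp [wappend, alph, List.mem_append]
  | inr f =>
    ext x
    simp only [wappend, alph, Set.mem_setOf_eq, Set.mem_union]
    constructor
    · rintro ⟨n, hn⟩
      by_cases h : n < u.length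
      · left; simp [h] at hn; subst hn; simp [List.get_eq_getElem]
      · right; simp [h] at hn; exact ⟨n - u.length, hn⟩
    · rintro (hx | ⟨n, hn⟩)
      · obtain ⟨i, hi, rfl⟩ := List.getElem_of_mem hx
        exact ⟨i, by simp [hi]⟩
      · exact ⟨u.length + n, by simp [Nat.add_sub_cancel_left, hn]⟩

lemma wappend_right_cancel {u : List Γ} {β β' : Word Γ}
    (h : wappend u β = wappend u β') : β = β' := by
  cases β with
  | inl v =>
    cases β' with
    | inl v' => simp [wappend] at h; simp [h]
    | inr f => simp [wappend] at h
  | inr f =>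
    cases β' with
    | inl v' => simp [wappend] at h
    | inr f' =>
      simp only [wappend, Sum.inr.injEq] at h
      have := congrFun h
      refine congrArg _ (funext fun n => ?_)
      have h2 := this (u.length + n)
      simpa [Nat.add_sub_cancel_left] using h2


/-- prefix of length `n` of an infinite word. -/
def pref (f : ℕ → Γ) (n : ℕ) : List Γ := (List.range n).map f

/-- shift of an infinite word. -/
def shift (f : ℕ → Γ) (s : ℕ) : ℕ → Γ := fun m => f (s + m)

/-- letters occurring at positions `≥ s`. -/
def tailAlph (f : ℕ → Γ) (s : ℕ) : Set Γ := alph (Sum.inr (shift f s) : Word Γ)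

@[simp] lemma length_pref (f : ℕ → Γ) (n : ℕ) : (pref f n).length = n := by
  simp [pref]

@[simp] lemma getElem_pref (f : ℕ → Γ) (n i : ℕ) (h : i < (pref f n).length) :
    (pref f n)[i] = f i := by
  simp [pref] at h ⊢

lemma mem_pref {f : ℕ → Γ} {n : ℕ} {c : Γ} : c ∈ pref f n ↔ ∃ i < n, f i = c := by
  simp [pref, eq_comm]

@[simp] lemma shift_shift (f : ℕ → Γ) (s t : ℕ) : shift (shift f s) t = shift f (s + t) := by
  funext m; simp [shift, Nat.add_assoc]

lemma mem_tailAlph {f : ℕ → Γ} {s : ℕ} {x : Γ} : x ∈ tailAlph f s ↔ ∃ m, f (s + m) = x :=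
  Iff.rfl

lemma tailAlph_antitone {f : ℕ → Γ} {m n : ℕ} (h : m ≤ n) : tailAlph f n ⊆ tailAlph f m := by
  rintro x ⟨i, rfl⟩
  refine ⟨n - m + i, ?_⟩
  show f (m + (n - m + i)) = f (n + i)
  congr 1; omega

lemma pref_add (f : ℕ → Γ) (m k : ℕ) :
    pref f (m + k) = pref f m ++ pref (shift f m) k := by
  simp only [pref, List.range_add, List.map_append, List.map_map]
  rfl

lemma wappend_pref_shift (f : ℕ → Γ) (n : ℕ) :
    wappend (pref f n) (Sum.inr (shift f n)) = Sum.inr f := by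
  simp only [wappend, Sum.inr.injEq]
  funext m
  by_cases h : m < (pref f n).length
  · rw [dif_pos h]; simp [List.get_eq_getElem]
  · rw [dif_neg h]
    show f (n + (m - (pref f n).length)) = f m
    simp only [length_pref] at h ⊢
    congr 1; omega

lemma mem_cone {α : Word Γ} {u : List Γ} {A : Set Γ} :
    α ∈ cone u A ↔ ∃ β, alph β ⊆ A ∧ α = wappend u β := by
  constructor
  · rintro ⟨β, hβ, rfl⟩; exact ⟨β, hβ, rfl⟩
  · rintro ⟨β, hβ, rfl⟩; exact ⟨β, hβ, rfl⟩

lemma isOpen_cone (u : List Γ) (A : Set Γ) : IsOpen (cone u A) :=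
  TopologicalSpace.GenerateOpen.basic _ ⟨u, A, rfl⟩

lemma mem_own_cone (f : ℕ → Γ) (n : ℕ) :
    Sum.inr f ∈ cone (pref f n) (tailAlph f n) :=
  mem_cone.2 ⟨Sum.inr (shift f n), subset_rfl, (wappend_pref_shift f n).symm⟩

lemma cone_pref_mono (f : ℕ → Γ) {m n : ℕ} (h : m ≤ n) :
    cone (pref f n) (tailAlph f n) ⊆ cone (pref f m) (tailAlph f m) := by
  rintro α hα
  obtain ⟨β, hβ, rfl⟩ := mem_cone.1 hα
  refine mem_cone.2 ⟨wappend (pref (shift f m) (n - m)) β, ?_, ?_⟩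
  · rw [alph_wappend]
    rintro x (hx | hx)
    · obtain ⟨i, _, rfl⟩ := mem_pref.1 hx
      exact ⟨i, rfl⟩
    · exact tailAlph_antitone h (hβ hx)
  · rw [← wappend_append, ← pref_add]
    congr 2
    omega

lemma exists_basic {U : Set (Word Γ)} (hU : IsOpen U) {f : ℕ → Γ} (hf : Sum.inr f ∈ U) :
    ∃ n, cone (pref f n) (tailAlph f n) ⊆ U := by
  have hU' : TopologicalSpace.GenerateOpen {S | ∃ u A, S = cone u A} U := hU
  clear hU
  induction hU' with
  | basic S hS =>
    obtain ⟨u, A, rfl⟩ := hS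
    obtain ⟨β, hβ, heq⟩ := mem_cone.1 hf
    cases β with
    | inl v => simp [wappend] at heq
    | inr g =>
      refine ⟨u.length, fun γ hγ => ?_⟩
      obtain ⟨β', hβ', rfl⟩ := mem_cone.1 hγ
      have hpref : pref f u.length = u := by
        apply List.ext_getElem (by simp)
        intro i h1 h2
        have := congrArg (fun w => match w with
          | Sum.inr F => F i
          | Sum.inl v => f i) heq
        simp only [wappend] at this
        simpa [List.get_eq_getElem, h2, getElem_pref] using this
      have htail : tailAlph f u.length ⊆ A := by
        rintro x ⟨m, rfl⟩
        have := congrArg (fun w => match w with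
          | Sum.inr F => F (u.length + m)
          | Sum.inl v => f 0) heq
        simp only [wappend] at this
        have h2 : ¬ u.length + m < u.length := by omega
        simp only [h2, dif_neg, not_false_iff, Nat.add_sub_cancel_left] at this
        show f (u.length + m) ∈ A
        rw [this]
        exact hβ ⟨m, rfl⟩
      exact mem_cone.2 ⟨β', fun x hx => htail (hβ' hx), by rw [hpref]⟩
  | univ => exact ⟨0, Set.subset_univ _⟩
  | inter U V hU hV ihU ihV =>
    obtain ⟨n₁, h₁⟩ := ihU hf.1
    obtain ⟨n₂, h₂⟩ := ihV hf.2
    exact ⟨max n₁ n₂, Set.subset_inter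
      ((cone_pref_mono f (le_max_left _ _)).trans h₁)
      ((cone_pref_mono f (le_max_right _ _)).trans h₂)⟩
  | sUnion S hS ih =>
    obtain ⟨s, hs, hfs⟩ := hf
    obtain ⟨n, hn⟩ := ih s hs hfs
    exact ⟨n, hn.trans (Set.subset_sUnion_of_mem hs)⟩

/-- the letter at position `m`. -/
def nth : Word Γ → ℕ → Option Γ
  | Sum.inl w, m => w[m]?
  | Sum.inr f, m => some (f m)

lemma nth_wappend (u : List Γ) (β : Word Γ) (m : ℕ) :
    nth (wappend u β) m = if h : m < u.length then some u[m] else nth β (m - u.length) := by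
  cases β with
  | inl w =>
    show (u ++ w)[m]? = _
    by_cases h : m < u.length
    · rw [dif_pos h, List.getElem?_append, if_pos h, List.getElem?_eq_getElem h]
    · rw [dif_neg h]
      show _ = w[m - u.length]?
      rw [List.getElem?_append, if_neg h]
  | inr f =>
    show some (if h : m < u.length then u.get ⟨m, h⟩ else f (m - u.length)) = _
    by_cases h : m < u.length
    · rw [dif_pos h, dif_pos h]; simp [List.get_eq_getElem]
    · rw [dif_neg h, dif_neg h]; rfl

lemma cone_empty (u : List Γ) : cone u (∅ : Set Γ) = {Sum.inl u} := by
  ext α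
  rw [mem_cone]
  constructor
  · rintro ⟨β, hβ, rfl⟩
    cases β with
    | inl v =>
      have : v = [] := by
        cases v with
        | nil => rfl
        | cons a t => exact absurd (hβ (show a ∈ alph (Sum.inl (a :: t)) from by simp [alph])) (Set.notMem_empty a)
      subst this
      simp [wappend]
    | inr f => exact absurd (hβ ⟨0, rfl⟩) (Set.notMem_empty _)
  · rintro rfl
    exact ⟨Sum.inl [], by simp [alph], by simp [wappend]⟩

lemma glue_nil_right (us : List (List Γ)) : glue us [] = [] := by
  cases us <;> rfl

lemma marker_mem_glue {us : List (List Γ)} {l : List (Set Γ × Γ)}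
    (h : us.length = l.length) {p : Set Γ × Γ} (hp : p ∈ l) : p.2 ∈ glue us l := by
  induction l generalizing us with
  | nil => cases hp
  | cons q l' ih =>
    cases us with
    | nil => simp at h
    | cons x xs =>
      show p.2 ∈ x ++ q.2 :: glue xs l'
      rcases List.mem_cons.1 hp with rfl | hp'
      · simp
      · simp only [List.mem_append, List.mem_cons]
        exact Or.inr (Or.inr (ih (by simpa using h) hp'))

lemma monomial_nil (B : Set Γ) : monomial ([] : List (Set Γ × Γ)) B = infin B := by
  ext α
  constructor
  · rintro ⟨us, β, h1, h2, h3, rfl⟩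
    rw [glue_nil_right, wappend_nil]
    exact h3
  · intro h
    exact ⟨[], α, rfl, by intro i h1; simp at h1, h, by rw [glue_nil_right, wappend_nil]⟩

lemma monomial_cons {A : Set Γ} {a : Γ} {l : List (Set Γ × Γ)} {B : Set Γ} {α : Word Γ} :
    α ∈ monomial ((A, a) :: l) B ↔
      ∃ u γ, (∀ c ∈ u, c ∈ A) ∧ γ ∈ monomial l B ∧ α = wappend (u ++ [a]) γ := by
  constructor
  · rintro ⟨us, β, h1, h2, h3, rfl⟩
    cases us with
    | nil => simp at h1
    | cons u us' =>
      refine ⟨u, wappend (glue us' l) β, ?_, ⟨us', β, by simpa using h1, ?_, h3, rfl⟩, ?_⟩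
      · intro c hc
        exact h2 0 (by simp) (by simp) c hc
      · intro i hi1 hi2 c hc
        exact h2 (i + 1) (by simpa using Nat.succ_lt_succ hi1) (by simpa using Nat.succ_lt_succ hi2) c hc
      · show wappend (glue (u :: us') ((A, a) :: l)) β = _
        show wappend (u ++ a :: glue us' l) β = _
        rw [show u ++ a :: glue us' l = (u ++ [a]) ++ glue us' l by simp, wappend_append]
  · rintro ⟨u, γ, hu, ⟨us', β, h1, h2, h3, rfl⟩, rfl⟩
    refine ⟨u :: us', β, by simpa using h1, ?_, h3, ?_⟩
    · intro i hi1 hi2 c hc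
      cases i with
      | zero => exact hu c hc
      | succ i => exact h2 i (by simpa using hi1) (by simpa using hi2) c hc
    · show _ = wappend (u ++ a :: glue us' l) β
      rw [show u ++ a :: glue us' l = (u ++ [a]) ++ glue us' l by simp, wappend_append,
        wappend_append, wappend_append]

lemma isOpen_monomial (l : List (Set Γ × Γ)) (B : Set Γ) : IsOpen (monomial l B) := by
  rw [isOpen_iff_mem_nhds]
  rintro α ⟨us, β, h1, h2, h3, rfl⟩
  rw [mem_nhds_iff]
  refine ⟨cone (glue us l) B, ?_, isOpen_cone _ _, mem_cone.2 ⟨β, h3, rfl⟩⟩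
  rintro γ hγ
  obtain ⟨β', hβ', rfl⟩ := mem_cone.1 hγ
  exact ⟨us, β', h1, h2, hβ', rfl⟩

lemma pref_eq_of_agree {f : ℕ → Γ} {u : List Γ} (h : ∀ i (hi : i < u.length), u[i] = f i) :
    pref f u.length = u := by
  apply List.ext_getElem (by rw [length_pref])
  intro i h1 h2
  rw [getElem_pref _ _ _ h1, h i h2]

/-- the word `wappend (pref f n) β` has `f i` at position `i < n`. -/
lemma nth_wappend_pref {f : ℕ → Γ} {n : ℕ} (β : Word Γ) {m : ℕ} (hm : m < n) :
    nth (wappend (pref f n) β) m = some (f m) := by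
  rw [nth_wappend]
  have h : m < (pref f n).length := by rw [length_pref]; exact hm
  rw [dif_pos h, getElem_pref _ _ _ h]

theorem closed_of_cond (l : List (Set Γ × Γ)) (B : Set Γ)
    (hcond : ∀ (j : ℕ) (hj : j < l.length), ¬ sndSet (l.drop j) ⊆ (l.get ⟨j, hj⟩).1) :
    IsClosed (monomial l B) := by
  induction l with
  | nil =>
    rw [monomial_nil, ← isOpen_compl_iff, isOpen_iff_mem_nhds]
    intro α hα
    rw [mem_nhds_iff]
    cases α with
    | inl w =>
      exact ⟨cone w ∅, by rw [cone_empty]; simpa using hα, isOpen_cone _ _,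
        by rw [cone_empty]; rfl⟩
    | inr f =>
      have : ¬ alph (Sum.inr f) ⊆ B := hα
      obtain ⟨x, ⟨q, rfl⟩, hxB⟩ := Set.not_subset.1 this
      refine ⟨cone (pref f (q + 1)) Set.univ, ?_, isOpen_cone _ _, ?_⟩
      · rintro γ hγ
        obtain ⟨β, -, rfl⟩ := mem_cone.1 hγ
        intro hmem
        exact hxB (hmem (by
          rw [alph_wappend]
          exact Or.inl (mem_pref.2 ⟨q, Nat.lt_succ_self q, rfl⟩)))
      · exact mem_cone.2 ⟨Sum.inr (shift f (q + 1)), Set.subset_univ _,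
          (wappend_pref_shift f (q + 1)).symm⟩
  | cons p l' ih =>
    obtain ⟨A, a⟩ := p
    have hcond' : ∀ (j : ℕ) (hj : j < l'.length), ¬ sndSet (l'.drop j) ⊆ (l'.get ⟨j, hj⟩).1 := by
      intro j hj
      exact hcond (j + 1) (by simpa using Nat.succ_lt_succ hj)
    have hP' : IsClosed (monomial l' B) := ih hcond'
    have h0 : ¬ sndSet ((A, a) :: l') ⊆ A := by
      simpa using hcond 0 (by simp)
    obtain ⟨b, hbmem, hbA⟩ := Set.not_subset.1 h0
    rw [← isOpen_compl_iff, isOpen_iff_mem_nhds]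
    intro α hα
    rw [mem_nhds_iff]
    cases α with
    | inl w =>
      exact ⟨cone w ∅, by rw [cone_empty]; simpa using hα, isOpen_cone _ _,
        by rw [cone_empty]; rfl⟩
    | inr f =>
      by_cases hA : ∀ q, f q ∈ A
      · -- all letters of α in A, but the monomial needs the marker b ∉ A
        refine ⟨cone [] (alph (Sum.inr f)), ?_, isOpen_cone _ _, ?_⟩
        · rintro γ hγ
          obtain ⟨β, hβ, rfl⟩ := mem_cone.1 hγ
          rw [wappend_nil]
          rintro ⟨us, δ, h1, h2, h3, rfl⟩
          have hbg : b ∈ alph (wappend (glue us ((A, a) :: l')) δ) := by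
            rw [alph_wappend]
            obtain ⟨pp, hpp, rfl⟩ := hbmem
            exact Or.inl (marker_mem_glue h1 hpp)
          have : b ∈ alph (Sum.inr f) := hβ hbg
          obtain ⟨q, rfl⟩ := this
          exact hbA (hA q)
        · exact mem_cone.2 ⟨Sum.inr f, subset_rfl, (wappend_nil _).symm⟩
      · push_neg at hA
        classical
        have hq0 : ∃ q, f q ∉ A := hA
        set q₀ := Nat.find hq0 with hq₀def
        have hq₀ : f q₀ ∉ A := Nat.find_spec hq0
        have hq₀min : ∀ r < q₀, f r ∈ A := by
          intro r hr
          by_contra hc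
          exact Nat.find_min hq0 hr hc
        -- tails at candidate marker positions are not in monomial l' B
        have htail : ∀ q, q ≤ q₀ → f q = a → Sum.inr (shift f (q + 1)) ∉ monomial l' B := by
          intro q hq hfq hmem
          apply hα
          rw [monomial_cons]
          refine ⟨pref f q, Sum.inr (shift f (q + 1)), ?_, hmem, ?_⟩
          · intro c hc
            obtain ⟨i, hi, rfl⟩ := mem_pref.1 hc
            exact hq₀min i (by omega)
          · have : pref f q ++ [a] = pref f (q + 1) := by
              rw [pref_add f q 1]
              congr 1
              have : pref (shift f q) 1 = [shift f q 0] := by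
                apply List.ext_getElem (by rw [length_pref]; rfl)
                intro i h1 h2
                rw [getElem_pref]
                rw [length_pref] at h1
                interval_cases i
                rfl
              rw [this]
              show _ = [f (q + 0)]
              simp [hfq]
            rw [this, wappend_pref_shift]
        -- choose radii avoiding monomial l' B around each tail
        have hex : ∀ q, ∃ M, (q ≤ q₀ ∧ f q = a) →
            cone (pref (shift f (q + 1)) M) (tailAlph (shift f (q + 1)) M) ⊆
              (monomial l' B)ᶜ := by
          intro q
          by_cases h : q ≤ q₀ ∧ f q = a
          · obtain ⟨M, hM⟩ := exists_basic (hP'.isOpen_compl) (htail q h.1 h.2)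
            exact ⟨M, fun _ => hM⟩
          · exact ⟨0, fun hc => absurd hc h⟩
        choose M hM using hex
        set n := max (q₀ + 1) ((Finset.range (q₀ + 1)).sup fun q => q + 1 + M q) with hn
        have hnq₀ : q₀ < n := by
          have := le_max_left (q₀ + 1) ((Finset.range (q₀ + 1)).sup fun q => q + 1 + M q)
          omega
        have hnM : ∀ q ≤ q₀, q + 1 + M q ≤ n := by
          intro q hq
          have h1 : q + 1 + M q ≤ (Finset.range (q₀ + 1)).sup fun q => q + 1 + M q :=
            Finset.le_sup (f := fun q => q + 1 + M q) (Finset.mem_range.2 (Nat.lt_succ_of_le hq))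
          have := le_max_right (q₀ + 1) ((Finset.range (q₀ + 1)).sup fun q => q + 1 + M q)
          omega
        refine ⟨cone (pref f n) (tailAlph f n), ?_, isOpen_cone _ _, mem_own_cone f n⟩
        rintro γ hγ
        obtain ⟨β, hβ, rfl⟩ := mem_cone.1 hγ
        rintro hmem
        rw [monomial_cons] at hmem
        obtain ⟨u, γ', hu, hγ', heq⟩ := hmem
        set q := u.length with hqdef
        -- letters of γ at positions < n are f-values
        have hnth : ∀ m < n, nth (wappend (pref f n) β) m = some (f m) :=
          fun m hm => nth_wappend_pref β hm
        have hnth2 : ∀ m (hmu : m < u.length),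
            nth (wappend (pref f n) β) m = some u[m] := by
          intro m hmu
          rw [heq, nth_wappend]
          have h : m < (u ++ [a]).length := by simp; omega
          rw [dif_pos h, List.getElem_append_left hmu]
        have hqq₀ : q ≤ q₀ := by
          by_contra hc
          push_neg at hc
          have h1 := hnth q₀ hnq₀
          have h2 := hnth2 q₀ (by omega)
          rw [h1] at h2
          exact hq₀ (by rw [Option.some_inj.1 h2]; exact hu _ (List.getElem_mem _))
        have hfq : f q = a := by
          have h1 := hnth q (by omega)
          rw [heq, nth_wappend] at h1
          have h : q < (u ++ [a]).length := by simp; omega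
          rw [dif_pos h] at h1
          have : (u ++ [a])[q] = a := by
            rw [List.getElem_append_right (by omega)]
            simp
          rw [this] at h1
          exact (Option.some_inj.1 h1).symm
        -- identify u with pref f q
        have hupref : u ++ [a] = pref f (q + 1) := by
          apply List.ext_getElem (by simp [length_pref]; omega)
          intro i h1 h2
          rw [getElem_pref]
          by_cases hi : i < u.length
          · rw [List.getElem_append_left hi]
            have := hnth2 i hi
            rw [hnth i (by omega)] at this
            exact (Option.some_inj.1 this).symm
          · have : i = q := by simp at h1; omega
            subst this
            rw [List.getElem_append_right (by omega)]
            simpa using hfq.symm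
        -- split the remainder
        have hsplit : pref f n = pref f (q + 1) ++
            (pref (shift f (q + 1)) (M q) ++ pref (shift f (q + 1 + M q)) (n - (q + 1) - M q)) := by
          have hle := hnM q hqq₀
          have e1 : pref f n = pref f (q + 1) ++ pref (shift f (q + 1)) (n - (q + 1)) := by
            rw [← pref_add]
            congr 1
            omega
          have e2 : pref (shift f (q + 1)) (n - (q + 1)) =
              pref (shift f (q + 1)) (M q) ++
                pref (shift f (q + 1 + M q)) (n - (q + 1) - M q) := by
            rw [← shift_shift f (q + 1) (M q), ← pref_add]
            congr 1
            omega
          rw [e1, e2]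
        have hγ'eq : γ' = wappend (pref (shift f (q + 1)) (M q))
            (wappend (pref (shift f (q + 1 + M q)) (n - (q + 1) - M q)) β) := by
          apply wappend_right_cancel (u := u ++ [a])
          rw [← heq, hsplit, ← hupref]
          simp only [wappend_append]
        -- now γ' lies in the forbidden cone
        have : γ' ∈ cone (pref (shift f (q + 1)) (M q)) (tailAlph (shift f (q + 1)) (M q)) := by
          rw [hγ'eq]
          refine mem_cone.2 ⟨_, ?_, rfl⟩
          rw [alph_wappend]
          rintro x (hx | hx)
          · obtain ⟨i, hi, rfl⟩ := mem_pref.1 hx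
            rw [mem_tailAlph]
            refine ⟨i, ?_⟩
            show f (q + 1 + (M q + i)) = f (q + 1 + M q + i)
            congr 1
            omega
          · have h1 : x ∈ tailAlph f n := hβ hx
            have h2 : tailAlph f n ⊆ tailAlph f (q + 1 + M q) :=
              tailAlph_antitone (hnM q hqq₀)
            rw [mem_tailAlph]
            obtain ⟨m, hm⟩ := mem_tailAlph.1 (h2 h1)
            refine ⟨m, ?_⟩
            show f (q + 1 + (M q + m)) = x
            rw [← hm]
            congr 1
            omega
        exact hM q ⟨hqq₀, hfq⟩ this hγ'

lemma glue_rep_nil (l : List (Set Γ × Γ)) :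
    glue (List.replicate l.length []) l = l.map Prod.snd := by
  induction l with
  | nil => rfl
  | cons p l' ih =>
    show glue ([] :: List.replicate l'.length []) (p :: l') = _
    show [] ++ p.2 :: glue (List.replicate l'.length []) l' = _
    rw [ih]
    rfl

lemma glue_rep (l : List (Set Γ × Γ)) (j : ℕ) (hj : j < l.length) (zs : List Γ) :
    glue (List.replicate j [] ++ zs :: List.replicate (l.length - j - 1) []) l =
      ((l.take j).map Prod.snd ++ zs) ++ (l.drop j).map Prod.snd := by
  induction j generalizing l with
  | zero =>
    cases l with
    | nil => simp at hj
    | cons p l' =>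
      show glue (zs :: List.replicate ((p :: l').length - 1) []) (p :: l') = _
      show zs ++ p.2 :: glue (List.replicate l'.length []) l' = _
      rw [glue_rep_nil]
      simp
  | succ j ih =>
    cases l with
    | nil => simp at hj
    | cons p l' =>
      have h0 : (p :: l').length - (j + 1) - 1 = l'.length - j - 1 := by
        simp only [List.length_cons]
        omega
      have h1 : List.replicate (j + 1) ([] : List Γ) ++ zs ::
            List.replicate ((p :: l').length - (j + 1) - 1) [] =
          [] :: (List.replicate j [] ++ zs :: List.replicate (l'.length - j - 1) []) := by
        rw [h0, List.replicate_succ, List.cons_append]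
      rw [h1]
      show [] ++ p.2 :: glue (List.replicate j [] ++ zs :: List.replicate (l'.length - j - 1) []) l' = _
      rw [List.nil_append, ih l' (by simpa using Nat.lt_of_succ_lt_succ hj)]
      simp

lemma us_getElem (j m : ℕ) (zs : List Γ) (i : ℕ)
    (h : i < (List.replicate j ([] : List Γ) ++ zs :: List.replicate m []).length) :
    (List.replicate j ([] : List Γ) ++ zs :: List.replicate m [])[i] =
      if i = j then zs else [] := by
  rcases lt_trichotomy i j with hij | rfl | hij
  · rw [List.getElem_append_left (by simpa using hij), List.getElem_replicate,
      if_neg (by omega)]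
  · rw [List.getElem_append_right (by simp), if_pos rfl]
    simp
  · rw [List.getElem_append_right (by simp; omega), if_neg (by omega)]
    have h2 : i - (List.replicate j ([] : List Γ)).length = (i - j - 1) + 1 := by
      simp
      omega
    simp only [h2, List.getElem_cons_succ, List.getElem_replicate]

lemma not_closed (l : List (Set Γ × Γ)) (B : Set Γ) (hunamb : Unambiguous l B)
    (j : ℕ) (hj : j < l.length) (hsub : sndSet (l.drop j) ⊆ (l.get ⟨j, hj⟩).1) :
    ¬ IsClosed (monomial l B) := by
  set w : List Γ := (l.take j).map Prod.snd with hw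
  set z : List Γ := (l.drop j).map Prod.snd with hzdef
  have hzpos : 0 < z.length := by
    rw [hzdef]
    simp
    omega
  set per : ℕ → Γ := fun n => z[n % z.length]'(Nat.mod_lt n hzpos) with hper
  have per_mem : ∀ n, per n ∈ z := fun n => List.getElem_mem _
  have hzA : ∀ c ∈ z, c ∈ (l.get ⟨j, hj⟩).1 := by
    intro c hc
    apply hsub
    obtain ⟨p, hp, rfl⟩ := List.mem_map.1 hc
    exact ⟨p, hp, rfl⟩
  have shift_per : ∀ t, shift per (t * z.length) = per := by
    intro t
    funext m
    show z[(t * z.length + m) % z.length]'_ = z[m % z.length]'_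
    congr 1
    rw [Nat.mul_comm, Nat.mul_add_mod]
  have wappend_z_per : wappend z (Sum.inr per) = Sum.inr per := by
    show Sum.inr _ = Sum.inr per
    congr 1
    funext m
    by_cases h : m < z.length
    · rw [dif_pos h]
      show z.get ⟨m, h⟩ = z[m % z.length]'_
      rw [List.get_eq_getElem]
      congr 1
      rw [Nat.mod_eq_of_lt h]
    · rw [dif_neg h]
      show z[(m - z.length) % z.length]'_ = z[m % z.length]'_
      congr 1
      conv_rhs => rw [Nat.mod_eq_sub_mod (show z.length ≤ m by omega)]
  have pref_per_len : pref per z.length = z := by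
    apply List.ext_getElem (by rw [length_pref])
    intro i h1 h2
    rw [getElem_pref]
    show z[i % z.length]'_ = z[i]'_
    congr 1
    rw [length_pref] at h1
    rw [Nat.mod_eq_of_lt h1]
  set F : ℕ → Γ := fun n => if h : n < w.length then w.get ⟨n, h⟩ else per (n - w.length)
    with hF
  have hαw : (Sum.inr F : Word Γ) = wappend w (Sum.inr per) := rfl
  have shift_F : shift F w.length = per := by
    funext m
    show F (w.length + m) = per m
    rw [hF]
    simp only []
    rw [dif_neg (by omega)]
    congr 1
    omega
  have pref_F_w : pref F w.length = w := by
    apply List.ext_getElem (by rw [length_pref])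
    intro i h1 h2
    rw [getElem_pref]
    show (if h : i < w.length then w.get ⟨i, h⟩ else per (i - w.length)) = w[i]
    rw [dif_pos h2]
    rw [List.get_eq_getElem]
  -- the key prefix computation
  have pref_F_eq : ∀ t, pref F (w.length + (t * z.length + z.length)) =
      (w ++ pref per (t * z.length)) ++ z := by
    intro t
    rw [pref_add, pref_add, shift_F, shift_per, pref_per_len, pref_F_w, List.append_assoc]
  -- factorization helper
  have usdef : ∀ zs : List Γ,
      (List.replicate j ([] : List Γ) ++ zs :: List.replicate (l.length - j - 1) []).length
        = l.length := by
    intro zs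
    simp
    omega
  have fact : ∀ (zs : List Γ) (β : Word Γ), (∀ c ∈ zs, c ∈ (l.get ⟨j, hj⟩).1) →
      β ∈ infin B → ∀ α : Word Γ, α = wappend ((w ++ zs) ++ z) β →
      IsFactorization l B
        (List.replicate j [] ++ zs :: List.replicate (l.length - j - 1) []) β α := by
    intro zs β hzs hβ α hα
    refine ⟨usdef zs, ?_, hβ, ?_⟩
    · intro i h1 h2 c hc
      rw [List.get_eq_getElem, us_getElem j _ zs i] at hc
      by_cases hij : i = j
      · subst hij
        rw [if_pos rfl] at hc
        exact hzs c hc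
      · rw [if_neg hij] at hc
        cases hc
    · rw [glue_rep l j hj zs]
      exact hα
  -- α is not in the monomial
  have hαP : (Sum.inr F : Word Γ) ∉ monomial l B := by
    rintro ⟨us0, β0, h1, h2, h3, heq⟩
    cases β0 with
    | inl v => simp [wappend] at heq
    | inr g =>
      have hFg : ∀ m, F m = if h : m < (glue us0 l).length
          then (glue us0 l).get ⟨m, h⟩ else g (m - (glue us0 l).length) := by
        intro m
        have := congrArg (fun w : Word Γ => match w with
          | Sum.inr FF => FF m
          | Sum.inl v => F m) heq
        simpa [wappend] using this
      set G := glue us0 l with hG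
      have hzB : ∀ c ∈ z, c ∈ B := by
        intro c hc
        obtain ⟨i, hi, rfl⟩ := List.getElem_of_mem hc
        set p := w.length + G.length * z.length + i with hp
        have hpG : ¬ p < G.length := by
          have := Nat.le_mul_of_pos_right G.length hzpos
          omega
        have h5 := hFg p
        rw [dif_neg hpG] at h5
        have h6 : F p = z[i] := by
          rw [hF]
          simp only []
          rw [dif_neg (by omega)]
          show z[(p - w.length) % z.length]'_ = z[i]
          congr 1
          have : p - w.length = G.length * z.length + i := by omega
          rw [this, Nat.mul_comm, Nat.mul_add_mod, Nat.mod_eq_of_lt hi]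
        apply h3
        exact ⟨p - G.length, by rw [← h5, h6]⟩
      have hperB : (Sum.inr per : Word Γ) ∈ infin B := by
        rintro x ⟨n, rfl⟩
        exact hzB _ (per_mem n)
      have hf1 : IsFactorization l B
          (List.replicate j [] ++ ([] : List Γ) :: List.replicate (l.length - j - 1) [])
          (Sum.inr per) (Sum.inr F) := by
        apply fact [] (Sum.inr per) (by intro c hc; cases hc) hperB
        rw [List.append_nil, wappend_append, wappend_z_per, hαw]
      have hf2 : IsFactorization l B
          (List.replicate j [] ++ z :: List.replicate (l.length - j - 1) [])
          (Sum.inr per) (Sum.inr F) := by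
        apply fact z (Sum.inr per) hzA hperB
        rw [wappend_append, wappend_z_per, wappend_append, wappend_z_per, hαw]
      obtain ⟨hus, -⟩ := hunamb _ _ _ _ _ hf1 hf2
      have h7 : ([] : List Γ) :: List.replicate (l.length - j - 1) ([] : List Γ) =
          z :: List.replicate (l.length - j - 1) [] :=
        List.append_cancel_left hus
      have h8 : ([] : List Γ) = z := (List.cons_eq_cons.mp h7).1
      rw [← h8] at hzpos
      simp at hzpos
  -- now derive the contradiction with closedness
  intro hcl
  have hopen := hcl.isOpen_compl
  obtain ⟨n, hn⟩ := exists_basic hopen (f := F) hαP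
  set L := w.length + (n * z.length + z.length) with hL
  have hnL : n ≤ L := by
    have := Nat.le_mul_of_pos_right n hzpos
    omega
  have hmem1 : (Sum.inl (pref F L) : Word Γ) ∈ cone (pref F n) (tailAlph F n) := by
    refine mem_cone.2 ⟨Sum.inl (pref (shift F n) (L - n)), ?_, ?_⟩
    · rintro x hx
      obtain ⟨i, hi, rfl⟩ := mem_pref.1 hx
      exact ⟨i, rfl⟩
    · show _ = Sum.inl (pref F n ++ pref (shift F n) (L - n))
      rw [← pref_add]
      congr 2
      omega
  have hmem2 : (Sum.inl (pref F L) : Word Γ) ∈ monomial l B := by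
    refine ⟨_, Sum.inl [], fact (pref per (n * z.length)) (Sum.inl []) ?_ ?_ _ ?_⟩
    · intro c hc
      obtain ⟨i, hi, rfl⟩ := mem_pref.1 hc
      exact hzA _ (per_mem i)
    · rintro x hx
      simp [alph] at hx
    · rw [hL, pref_F_eq]
      show Sum.inl _ = Sum.inl (((w ++ pref per (n * z.length)) ++ z) ++ [])
      rw [List.append_nil]
  exact hn hmem1 hmem2

end InfWords

theorem unambiguous_monomial_closed_tfae (Γ : Type) [Fintype Γ]
    (l : List (Set Γ × Γ)) (B : Set Γ) (hunamb : InfWords.Unambiguous l B) :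
    ((∀ (j : ℕ) (hj : j < l.length), ¬ InfWords.sndSet (l.drop j) ⊆ (l.get ⟨j, hj⟩).1) ↔
        IsClosed (InfWords.monomial l B)) ∧
      (IsClosed (InfWords.monomial l B) ↔ IsClopen (InfWords.monomial l B)) := by
  constructor
  · constructor
    · exact fun hcond => InfWords.closed_of_cond l B hcond
    · intro hcl j hj
      by_contra hsub
      exact InfWords.not_closed l B hunamb j hj hsub hcl
  · exact ⟨fun h => ⟨h, InfWords.isOpen_monomial l B⟩, fun h => h.1⟩
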